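/- arXiv:math/0511374 — 2 statements merged into one kernel-verified Lean document; each statement's English description precedes it below -/
import Mathlib

section
/- For each subset X of {1,...,n}, the set Nil(X) of elements of the Kiselman semigroup K_n with content exactly X is a subsemigroup that is nilpotent with zero element e_X, of nilpotency class |X| when X is nonempty (and class 1 when X = ∅); and K_n is the disjoint union of the Nil(X) over all subsets X. -/
/-- The defining relations of the Kiselman semigroup `K_n`:
`aᵢ² = aᵢ`, and `aᵢaⱼaᵢ = aⱼaᵢaⱼ = aⱼaᵢ` for `i < j`. -/
inductive KisRel (n : ℕ) : FreeMonoid (Fin n) → FreeMonoid (Fin n) → Prop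
  | idem (i : Fin n) : KisRel n (.of i * .of i) (.of i)
  | braid₁ {i j : Fin n} (h : i < j) :
      KisRel n (.of i * .of j * .of i) (.of j * .of i)
  | braid₂ {i j : Fin n} (h : i < j) :
      KisRel n (.of j * .of i * .of j) (.of j * .of i)

/-- The Kiselman semigroup (monoid) `K_n`. -/
abbrev Kiselman (n : ℕ) := PresentedMonoid (KisRel n)

/-- The canonical projection from the free monoid on the generators to `K_n`. -/
def kmk (n : ℕ) : FreeMonoid (Fin n) →* Kiselman n := PresentedMonoid.mk (KisRel n)

/-- The generator `a_{i+1}` (0-indexed: `ka i` is the paper's `a_{i+1}`). -/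
def ka {n : ℕ} (i : Fin n) : Kiselman n := PresentedMonoid.of (KisRel n) i

/-- The idempotent `e_X`: the product of the generators indexed by `X` in strictly
decreasing order of indices. -/
def eX {n : ℕ} (X : Finset (Fin n)) : Kiselman n :=
  kmk n (FreeMonoid.ofList ((X.sort (· ≤ ·)).reverse))

namespace KisAux

variable {n : ℕ}

/-- product of generators of a list -/
def kP (l : List (Fin n)) : Kiselman n := kmk n (FreeMonoid.ofList l)

/-- the idempotent of a sorted (increasing) list -/
def kE (L : List (Fin n)) : Kiselman n := kP L.reverse

lemma kP_nil : kP ([] : List (Fin n)) = 1 := rfl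

lemma kP_append (u v : List (Fin n)) : kP (u ++ v) = kP u * kP v := by
  unfold kP
  rw [show FreeMonoid.ofList (u ++ v) = FreeMonoid.ofList u * FreeMonoid.ofList v from rfl,
    map_mul]

lemma kP_cons (a : Fin n) (l : List (Fin n)) : kP (a :: l) = ka a * kP l := by
  rw [show (a :: l) = [a] ++ l from rfl, kP_append]; rfl

lemma kP_singleton (a : Fin n) : kP [a] = ka a := rfl

lemma ksound {a b : FreeMonoid (Fin n)} (h : KisRel n a b) : kmk n a = kmk n b :=
  Quotient.sound (ConGen.Rel.of a b h)

lemma rel1 (i : Fin n) : ka i * ka i = ka i := ksound (KisRel.idem i)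

lemma rel2 {i j : Fin n} (h : i < j) : ka i * ka j * ka i = ka j * ka i :=
  ksound (KisRel.braid₁ h)

lemma rel3 {i j : Fin n} (h : i < j) : ka j * ka i * ka j = ka j * ka i :=
  ksound (KisRel.braid₂ h)

lemma collapse_right {m : Fin n} (z : List (Fin n)) (hz : ∀ x ∈ z, m < x) :
    ka m * kP z * ka m = kP z * ka m := by
  induction z using List.reverseRecOn with
  | nil => simp [kP_nil, rel1]
  | append_singleton z' j ih =>
    have hj : m < j := hz j (by simp)
    have ihz : ka m * kP z' * ka m = kP z' * ka m := ih (fun x hx => hz x (by simp [hx]))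
    have h1 : ka j * ka m = ka m * ka j * ka m := (rel2 hj).symm
    rw [kP_append, kP_singleton]
    calc ka m * (kP z' * ka j) * ka m
        = (ka m * kP z') * (ka j * ka m) := by rw [mul_assoc, mul_assoc, mul_assoc]
      _ = (ka m * kP z') * (ka m * ka j * ka m) := by rw [h1]
      _ = (ka m * kP z' * ka m) * (ka j * ka m) := by
          simp only [mul_assoc]
      _ = (kP z' * ka m) * (ka j * ka m) := by rw [ihz]
      _ = kP z' * (ka m * ka j * ka m) := by simp only [mul_assoc]
      _ = kP z' * (ka j * ka m) := by rw [rel2 hj]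
      _ = kP z' * ka j * ka m := by rw [mul_assoc]

lemma filter_collapse {m : Fin n} (u : List (Fin n)) (hu : ∀ x ∈ u, m ≤ x) :
    kP u * ka m = kP (u.filter (fun x => decide (x ≠ m))) * ka m := by
  induction u with
  | nil => simp
  | cons a u' ih =>
    have ihu : kP u' * ka m = kP (u'.filter (fun x => decide (x ≠ m))) * ka m :=
      ih (fun x hx => hu x (by simp [hx]))
    by_cases ha : a = m
    · subst ha
      have hfil : ∀ x ∈ u'.filter (fun x => decide (x ≠ a)), a < x := by
        intro x hx
        rw [List.mem_filter] at hx
        have hxa : x ≠ a := by simpa using hx.2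
        exact lt_of_le_of_ne (hu x (by simp [hx.1])) hxa.symm
      calc kP (a :: u') * ka a = ka a * (kP u' * ka a) := by rw [kP_cons, mul_assoc]
        _ = ka a * (kP (u'.filter (fun x => decide (x ≠ a))) * ka a) := by rw [ihu]
        _ = ka a * kP (u'.filter (fun x => decide (x ≠ a))) * ka a := by rw [mul_assoc]
        _ = kP (u'.filter (fun x => decide (x ≠ a))) * ka a := collapse_right _ hfil
        _ = kP ((a :: u').filter (fun x => decide (x ≠ a))) * ka a := by simp
    · calc kP (a :: u') * ka m = ka a * (kP u' * ka m) := by rw [kP_cons, mul_assoc]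
        _ = ka a * (kP (u'.filter (fun x => decide (x ≠ m))) * ka m) := by rw [ihu]
        _ = kP ((a :: u').filter (fun x => decide (x ≠ m))) * ka m := by
            rw [List.filter_cons_of_pos (by simpa using ha), kP_cons, mul_assoc]

lemma kE_nil : kE ([] : List (Fin n)) = 1 := rfl

lemma kE_cons (m : Fin n) (L : List (Fin n)) : kE (m :: L) = kE L * ka m := by
  unfold kE
  rw [List.reverse_cons, kP_append, kP_singleton]

lemma absorb_gen (L : List (Fin n)) (hL : L.Pairwise (· < ·)) :
    ∀ t ∈ L, (kE L * ka t = kE L ∧ ka t * kE L = kE L) := by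
  induction L with
  | nil => intro t ht; cases ht
  | cons m L' ih =>
    rw [List.pairwise_cons] at hL
    obtain ⟨hm, hL'⟩ := hL
    intro t ht
    rw [kE_cons]
    rcases List.mem_cons.mp ht with h | h
    · subst h
      constructor
      · rw [mul_assoc, rel1]
      · have : ∀ x ∈ L'.reverse, t < x := by intro x hx; exact hm x (List.mem_reverse.mp hx)
        exact collapse_right (L'.reverse) this
    · have htm : m < t := hm t h
      obtain ⟨ihr, ihl⟩ := ih hL' t h
      constructor
      · calc kE L' * ka m * ka t
            = (kE L' * ka t) * ka m * ka t := by rw [ihr]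
          _ = kE L' * (ka t * ka m * ka t) := by simp only [mul_assoc]
          _ = kE L' * (ka t * ka m) := by rw [rel3 htm]
          _ = (kE L' * ka t) * ka m := by simp only [mul_assoc]
          _ = kE L' * ka m := by rw [ihr]
      · calc ka t * (kE L' * ka m) = (ka t * kE L') * ka m := by rw [mul_assoc]
          _ = kE L' * ka m := by rw [ihl]

lemma absorb_right_word (L : List (Fin n)) (hL : L.Pairwise (· < ·)) (w : List (Fin n))
    (hw : ∀ x ∈ w, x ∈ L) : kE L * kP w = kE L := by
  induction w with
  | nil => simp [kP_nil]
  | cons a w' ih =>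
    rw [kP_cons, ← mul_assoc, (absorb_gen L hL a (hw a (by simp))).1]
    exact ih (fun x hx => hw x (by simp [hx]))

lemma absorb_left_word (L : List (Fin n)) (hL : L.Pairwise (· < ·)) (w : List (Fin n))
    (hw : ∀ x ∈ w, x ∈ L) : kP w * kE L = kE L := by
  induction w with
  | nil => simp [kP_nil]
  | cons a w' ih =>
    rw [kP_cons, mul_assoc, ih (fun x hx => hw x (by simp [hx])),
      (absorb_gen L hL a (hw a (by simp))).2]

lemma split_last {m : Fin n} (l : List (Fin n)) (hm : m ∈ l) :
    ∃ p v, l = p ++ m :: v ∧ m ∉ v := by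
  induction l with
  | nil => cases hm
  | cons a l' ih =>
    by_cases h : m ∈ l'
    · obtain ⟨p, v, rfl, hv⟩ := ih h
      exact ⟨a :: p, v, rfl, hv⟩
    · have : m = a := by rcases List.mem_cons.mp hm with h' | h'; exact h'; exact absurd h' h
      subst this
      exact ⟨[], l', rfl, h⟩

lemma filter_flatten (q : Fin n → Bool) (l : List (List (Fin n))) :
    l.flatten.filter q = (l.map (fun w => w.filter q)).flatten := by
  induction l with
  | nil => rfl
  | cons w l' ih => simp [List.filter_append, ih]

lemma main (L : List (Fin n)) (hL : L.Pairwise (· < ·)) :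
    ∀ ws : List (List (Fin n)), (∀ w ∈ ws, w.toFinset = L.toFinset) →
      ws.length = L.length → kP ws.flatten = kE L := by
  induction L with
  | nil =>
    intro ws _ hlen
    have : ws = [] := by simpa using hlen
    subst this
    rfl
  | cons m L' ih =>
    intro ws hctn hlen
    rw [List.pairwise_cons] at hL
    obtain ⟨hm, hL'⟩ := hL
    have hmL' : m ∉ L'.toFinset := by
      simp only [List.mem_toFinset]
      intro h; exact absurd rfl (ne_of_lt (hm m h))
    have hne : ws ≠ [] := by intro h; subst h; simp at hlen
    set ws' := ws.dropLast with hws'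
    set wl := ws.getLast hne with hwl
    have hwseq : ws' ++ [wl] = ws := List.dropLast_append_getLast hne
    have hwl_mem : wl ∈ ws := List.getLast_mem hne
    have hws'_sub : ∀ w ∈ ws', w ∈ ws := fun w hw => List.dropLast_subset ws hw
    have hmwl : m ∈ wl := by
      have := hctn wl hwl_mem
      have : m ∈ wl.toFinset := by rw [this]; simp
      simpa using this
    obtain ⟨p, v, hwl_split, hv⟩ := split_last wl hmwl
    -- membership facts
    have hmemL : ∀ x : Fin n, x ∈ (m :: L').toFinset → m ≤ x := by
      intro x hx
      simp only [List.toFinset_cons, Finset.mem_insert, List.mem_toFinset] at hx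
      rcases hx with rfl | hx
      · exact le_refl x
      · exact le_of_lt (hm x hx)
    have hletters : ∀ w ∈ ws, ∀ x ∈ w, x ∈ (m :: L').toFinset := by
      intro w hw x hx
      rw [← hctn w hw]
      simpa using hx
    -- the flatten decomposition
    have hflat : ws.flatten = (ws'.flatten ++ p) ++ (m :: v) := by
      conv_lhs => rw [← hwseq]
      rw [List.flatten_append]
      simp [hwl_split]
    set U := ws'.flatten ++ p with hU
    have hUle : ∀ x ∈ U, m ≤ x := by
      intro x hx
      rcases List.mem_append.mp hx with h | h
      · obtain ⟨w, hw, hxw⟩ := List.mem_flatten.mp h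
        exact hmemL x (hletters w (hws'_sub w hw) x hxw)
      · exact hmemL x (hletters wl hwl_mem x (by simp [hwl_split, h]))
    have hstep : kP ws.flatten = kP U * ka m * kP v := by
      rw [hflat, kP_append, kP_cons, ← mul_assoc]
    rw [hstep, filter_collapse U hUle]
    -- the filtered U
    have hfilU : U.filter (fun x => decide (x ≠ m)) =
        (ws'.map (fun w => w.filter (fun x => decide (x ≠ m)))).flatten ++
          p.filter (fun x => decide (x ≠ m)) := by
      rw [hU, List.filter_append, filter_flatten]
    have hctn' : ∀ w ∈ ws'.map (fun w => w.filter (fun x => decide (x ≠ m))),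
        w.toFinset = L'.toFinset := by
      intro w hw
      obtain ⟨w0, hw0, rfl⟩ := List.mem_map.mp hw
      ext a
      simp only [List.mem_toFinset, List.mem_filter, decide_eq_true_eq]
      constructor
      · rintro ⟨ha, hne⟩
        have := hletters w0 (hws'_sub w0 hw0) a ha
        simp only [List.toFinset_cons, Finset.mem_insert, List.mem_toFinset] at this
        rcases this with rfl | h
        · exact absurd rfl hne
        · exact h
      · intro ha
        have ha' : a ∈ w0.toFinset := by
          rw [hctn w0 (hws'_sub w0 hw0)]
          simp [ha]
        refine ⟨by simpa using ha', ?_⟩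
        intro h; subst h; exact hmL' (by simpa using ha)
    have hlen' : (ws'.map (fun w => w.filter (fun x => decide (x ≠ m)))).length = L'.length := by
      rw [List.length_map, hws', List.length_dropLast, hlen]
      simp
    have hih := ih hL' _ hctn' hlen'
    have hpfil : ∀ x ∈ p.filter (fun x => decide (x ≠ m)), x ∈ L' := by
      intro x hx
      rw [List.mem_filter, decide_eq_true_eq] at hx
      have := hletters wl hwl_mem x (by simp [hwl_split, hx.1])
      simp only [List.toFinset_cons, Finset.mem_insert, List.mem_toFinset] at this
      rcases this with rfl | h
      · exact absurd rfl hx.2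
      · exact h
    have hUval : kP (U.filter (fun x => decide (x ≠ m))) = kE L' := by
      rw [hfilU, kP_append, hih, absorb_right_word L' hL' _ hpfil]
    rw [hUval, ← kE_cons]
    have hvL : ∀ x ∈ v, x ∈ m :: L' := by
      intro x hx
      have := hletters wl hwl_mem x (by simp [hwl_split, hx])
      simpa using this
    exact absorb_right_word (m :: L') (by rw [List.pairwise_cons]; exact ⟨hm, hL'⟩) v hvL

/-! ### The model : action on `Fin n → ℕ` -/

def Nv (i : Fin n) (v : Fin n → ℕ) : ℕ := (Finset.Iio i).sup v + 1

def AA (i : Fin n) : Function.End (Fin n → ℕ) := fun v => Function.update v i (Nv i v)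

lemma Nv_update {i j : Fin n} (h : ¬ j < i) (v : Fin n → ℕ) (x : ℕ) :
    Nv i (Function.update v j x) = Nv i v := by
  unfold Nv
  congr 1
  apply Finset.sup_congr rfl
  intro a ha
  rw [Finset.mem_Iio] at ha
  exact Function.update_of_ne (fun hne => h (by rw [← hne]; exact ha)) _ _

lemma end_mul_apply (f g : Function.End (Fin n → ℕ)) (v : Fin n → ℕ) :
    (f * g) v = f (g v) := rfl

lemma AA_apply (i : Fin n) (v : Fin n → ℕ) : AA i v = Function.update v i (Nv i v) := rfl

lemma update_self_of_eq {f : Fin n → ℕ} {a : Fin n} {x : ℕ} (h : f a = x) :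
    Function.update f a x = f := by
  rw [← h]; exact Function.update_eq_self a f

lemma AA_rel : ∀ a b : FreeMonoid (Fin n), KisRel n a b →
    FreeMonoid.lift AA a = FreeMonoid.lift AA b := by
  intro a b hr
  induction hr with
  | idem i =>
    simp only [map_mul, FreeMonoid.lift_eval_of]
    funext v
    show AA i (AA i v) = AA i v
    rw [show AA i v = Function.update v i (Nv i v) from rfl, AA_apply,
      Nv_update (lt_irrefl i), Function.update_idem]
  | braid₁ h =>
    rename_i i j
    simp only [map_mul, FreeMonoid.lift_eval_of]
    funext v
    show AA i (AA j (AA i v)) = AA j (AA i v)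
    set v₁ := AA i v with hv₁
    rw [show AA j v₁ = Function.update v₁ j (Nv j v₁) from rfl,
      show AA i (Function.update v₁ j (Nv j v₁)) =
        Function.update (Function.update v₁ j (Nv j v₁)) i
          (Nv i (Function.update v₁ j (Nv j v₁))) from rfl]
    apply update_self_of_eq
    rw [Nv_update (fun hh => absurd hh (not_lt_of_gt h)),
      Function.update_of_ne (ne_of_lt h), hv₁, AA_apply,
      Nv_update (lt_irrefl i), Function.update_self]
  | braid₂ h =>
    rename_i i j
    simp only [map_mul, FreeMonoid.lift_eval_of]
    funext v
    show AA j (AA i (AA j v)) = AA j (AA i v)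
    have e1 : AA i (AA j v) = Function.update (AA j v) i (Nv i v) := by
      rw [AA_apply (v := AA j v), AA_apply j v, Nv_update (fun hh => absurd hh (not_lt_of_gt h))]
    have e2 : Function.update (AA j v) i (Nv i v) = Function.update (AA i v) j (Nv j v) := by
      rw [AA_apply j v, AA_apply i v, Function.update_comm (ne_of_lt h).symm]
    rw [e1, e2, AA_apply j (Function.update (AA i v) j (Nv j v)),
      Nv_update (lt_irrefl j), Function.update_idem, AA_apply j (AA i v)]

def phi : Kiselman n →* Function.End (Fin n → ℕ) := PresentedMonoid.lift AA AA_rel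

lemma phi_ka (i : Fin n) : phi (ka i) = AA i := rfl

lemma phi_kP (l : List (Fin n)) : phi (kP l) = (l.map AA).prod := by
  induction l with
  | nil => simp [kP_nil]
  | cons a l' ih => rw [kP_cons, map_mul, phi_ka, List.map_cons, List.prod_cons, ih]

lemma prodA_notmem (l : List (Fin n)) (v : Fin n → ℕ) (t : Fin n) (ht : t ∉ l) :
    ((l.map AA).prod : Function.End (Fin n → ℕ)) v t = v t := by
  induction l with
  | nil => rfl
  | cons a l' ih =>
    rw [List.map_cons, List.prod_cons, end_mul_apply]
    show (AA a) (((l'.map AA).prod : Function.End (Fin n → ℕ)) v) t = v t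
    rw [AA_apply]
    rw [Function.update_of_ne (fun h => ht (by rw [h]; exact List.mem_cons_self))]
    exact ih (fun h => ht (List.mem_cons_of_mem a h))

lemma prodA_upper (l : List (Fin n)) (hl : l.Pairwise (· ≤ ·)) (v : Fin n → ℕ) (c : ℕ)
    (hv : ∀ t, v t ≤ c) : ∀ t, ((l.map AA).prod : Function.End (Fin n → ℕ)) v t ≤ c + 1 := by
  induction l with
  | nil => intro t; exact le_trans (hv t) (Nat.le_succ c)
  | cons i l' ih =>
    rw [List.pairwise_cons] at hl
    obtain ⟨hi, hl'⟩ := hl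
    intro t
    rw [List.map_cons, List.prod_cons, end_mul_apply]
    show (AA i) (((l'.map AA).prod : Function.End (Fin n → ℕ)) v) t ≤ c + 1
    rw [AA_apply]
    by_cases h : t = i
    · subst h
      rw [Function.update_self]
      rw [show Nv t (((l'.map AA).prod : Function.End (Fin n → ℕ)) v) =
        (Finset.Iio t).sup (((l'.map AA).prod : Function.End (Fin n → ℕ)) v) + 1 from rfl]
      have : (Finset.Iio t).sup (((l'.map AA).prod : Function.End (Fin n → ℕ)) v) ≤ c := by
        apply Finset.sup_le
        intro a ha
        rw [Finset.mem_Iio] at ha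
        have hanotin : a ∉ l' := fun hmem => absurd (hi a hmem) (not_le_of_gt ha)
        rw [prodA_notmem l' v a hanotin]
        exact hv a
      omega
    · rw [Function.update_of_ne h]
      exact ih hl' t

lemma prodA_lower (L : List (Fin n)) (hL : L.Pairwise (· < ·)) (v : Fin n → ℕ) (hne : L ≠ []) :
    L.length ≤ ((L.reverse.map AA).prod : Function.End (Fin n → ℕ)) v (L.getLast hne) := by
  induction L using List.reverseRecOn with
  | nil => exact absurd rfl hne
  | append_singleton L' m ih =>
    have hsortL' : L'.Pairwise (· < ·) := hL.sublist (List.sublist_append_left _ _)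
    have hlt : ∀ x ∈ L', x < m := by
      intro x hx
      have := List.pairwise_append.mp hL
      exact this.2.2 x hx m (by simp)
    rw [List.getLast_append_singleton]
    rw [List.reverse_append, List.reverse_singleton, List.singleton_append,
      List.map_cons, List.prod_cons, end_mul_apply]
    show (L' ++ [m]).length ≤ (AA m) (((L'.reverse.map AA).prod : Function.End (Fin n → ℕ)) v) m
    rw [AA_apply, Function.update_self]
    rw [show Nv m (((L'.reverse.map AA).prod : Function.End (Fin n → ℕ)) v) =
      (Finset.Iio m).sup (((L'.reverse.map AA).prod : Function.End (Fin n → ℕ)) v) + 1 from rfl]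
    rw [List.length_append, List.length_singleton]
    rcases eq_or_ne L' [] with rfl | hne'
    · simp
    · have hlast_mem : L'.getLast hne' ∈ Finset.Iio m := by
        rw [Finset.mem_Iio]
        exact hlt _ (List.getLast_mem hne')
      have hle := Finset.le_sup (f := ((L'.reverse.map AA).prod : Function.End (Fin n → ℕ)) v) hlast_mem
      have hih := ih hsortL' hne'
      omega

end KisAux

/-- Theorem 5: for the content map `c` on `K_n`, the set `Nil(X) = {x : c x = X}` is a
subsemigroup with zero element `e_X`, nilpotent of class `|X|` (class 1 for `X = ∅`):
every product of at least `|X|` elements of `Nil(X)` equals `e_X`, and for nonempty `X`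
some product of `|X| - 1` elements of `Nil(X)` differs from `e_X`. Moreover `K_n` is
the disjoint union of the `Nil(X)` (each `x` lies in `Nil(X)` exactly for `X = c x`). -/
theorem kiselman_nilpotent_subsemigroups (n : ℕ)
    (c : Kiselman n → Finset (Fin n))
    (hc : ∀ w : FreeMonoid (Fin n), c (kmk n w) = w.toList.toFinset)
    (X : Finset (Fin n)) :
    (∀ x y : Kiselman n, c x = X → c y = X → c (x * y) = X) ∧
    c (eX X) = X ∧
    (∀ x : Kiselman n, c x = X → x * eX X = eX X ∧ eX X * x = eX X) ∧
    (∀ l : List (Kiselman n), (∀ x ∈ l, c x = X) → X.card ≤ l.length →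
      l.prod = eX X) ∧
    (X.Nonempty → ∃ l : List (Kiselman n), (∀ x ∈ l, c x = X) ∧
      l.length = X.card - 1 ∧ l.prod ≠ eX X) ∧
    (∀ x : Kiselman n, ∃! Y : Finset (Fin n), c x = Y) := by
  classical
  open KisAux in
  set L : List (Fin n) := X.sort (· ≤ ·) with hLdef
  have hLsort : L.Pairwise (· < ·) := (Finset.sortedLT_sort X).pairwise
  have hLfin : L.toFinset = X := Finset.sort_toFinset X _
  have hLlen : L.length = X.card := Finset.length_sort _
  have heX : eX X = kE L := rfl
  have hsurj : ∀ x : Kiselman n, ∃ w : List (Fin n), kP w = x := by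
    intro x
    obtain ⟨w, hw⟩ := PresentedMonoid.surjective_mk (rels := KisRel n) x
    exact ⟨FreeMonoid.toList w, by rw [kP, FreeMonoid.ofList_toList]; exact hw⟩
  have hckP : ∀ w : List (Fin n), c (kP w) = w.toFinset := by
    intro w
    rw [kP, hc, FreeMonoid.toList_ofList]
  refine ⟨?_, ?_, ?_, ?_, ?_, ?_⟩
  · -- closed under multiplication
    intro x y hx hy
    obtain ⟨w, rfl⟩ := hsurj x
    obtain ⟨w', rfl⟩ := hsurj y
    have hx' : w.toFinset = X := by rw [← hckP w]; exact hx
    have hy' : w'.toFinset = X := by rw [← hckP w']; exact hy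
    rw [← kP_append, hckP, List.toFinset_append, hx', hy', Finset.union_self]
  · -- content of eX
    rw [eX, hc, FreeMonoid.toList_ofList, List.toFinset_reverse, Finset.sort_toFinset]
  · -- zero element
    intro x hx
    obtain ⟨w, rfl⟩ := hsurj x
    have hw : ∀ a ∈ w, a ∈ L := by
      intro a ha
      rw [hLdef, Finset.mem_sort]
      rw [hckP w] at hx
      rw [← hx]
      simpa using ha
    rw [heX]
    exact ⟨absorb_left_word L hLsort w hw, absorb_right_word L hLsort w hw⟩
  · -- products of length ≥ |X| equal eX
    intro l hl hlen
    obtain ⟨ws, rfl⟩ : ∃ ws : List (List (Fin n)), ws.map kP = l := by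
      clear hl hlen
      induction l with
      | nil => exact ⟨[], rfl⟩
      | cons x l' ih =>
        obtain ⟨ws', hws'⟩ := ih
        obtain ⟨w, hw⟩ := hsurj x
        exact ⟨w :: ws', by rw [List.map_cons, hws', hw]⟩
    have hctn : ∀ w ∈ ws, w.toFinset = L.toFinset := by
      intro w hw
      rw [hLfin, ← hckP w]
      exact hl (kP w) (List.mem_map_of_mem (f := kP) hw)
    have hlen' : X.card ≤ ws.length := by rwa [List.length_map] at hlen
    have hsplit : ws = ws.take X.card ++ ws.drop X.card := (List.take_append_drop _ _).symm
    have hprod : (ws.map kP).prod = kP ws.flatten := by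
      clear hctn hlen' hsplit hl hlen
      induction ws with
      | nil => rfl
      | cons w ws' ih => rw [List.map_cons, List.prod_cons, List.flatten_cons, kP_append, ih]
    rw [hprod, heX]
    conv_lhs => rw [hsplit]
    rw [List.flatten_append, kP_append]
    have htake : kP (ws.take X.card).flatten = kE L := by
      apply main L hLsort
      · intro w hw; exact hctn w (List.mem_of_mem_take hw)
      · rw [List.length_take, hLlen]
        exact min_eq_left hlen'
    rw [htake]
    apply absorb_right_word L hLsort
    intro x hx
    obtain ⟨w, hw, hxw⟩ := List.mem_flatten.mp hx
    have : x ∈ w.toFinset := by simpa using hxw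
    rw [hctn w (List.mem_of_mem_drop hw)] at this
    simpa using this
  · -- witness of non-nilpotency at |X| - 1
    intro hXne
    have hLne : L ≠ [] := by
      intro h
      refine hXne.ne_empty ?_
      rw [← hLfin, h]
      simp
    refine ⟨List.replicate (X.card - 1) (kP L), ?_, List.length_replicate, ?_⟩
    · intro x hx
      rw [List.eq_of_mem_replicate hx, hckP, hLfin]
    · rw [List.prod_replicate]
      intro hEq
      have h1 : phi ((kP L) ^ (X.card - 1)) = phi (kE L) := by rw [← heX, hEq]
      rw [map_pow, phi_kP] at h1
      have h2 : phi (kE L) = ((L.reverse.map AA).prod : Function.End (Fin n → ℕ)) := by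
        rw [kE, phi_kP]
      rw [h2] at h1
      set v0 : Fin n → ℕ := fun _ => 0 with hv0
      have hupper : ∀ j : ℕ, ∀ t, ((((L.map AA).prod : Function.End (Fin n → ℕ)))^j) v0 t ≤ j := by
        intro j
        induction j with
        | zero => intro t; exact le_refl 0
        | succ j ihj =>
          intro t
          rw [pow_succ']
          rw [end_mul_apply]
          exact prodA_upper L (hLsort.imp le_of_lt) _ j ihj t
      have hlower : X.card ≤ ((L.reverse.map AA).prod : Function.End (Fin n → ℕ)) v0 (L.getLast hLne) := by
        rw [← hLlen]
        exact prodA_lower L hLsort v0 hLne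
      have := hupper (X.card - 1) (L.getLast hLne)
      rw [h1] at this
      have hcard : 1 ≤ X.card := Finset.card_pos.mpr hXne
      omega
  · -- unique content
    intro x
    exact ⟨c x, rfl, fun Y hY => hY.symm⟩
end

section
/- For X ⊆ {1,...,n} with X = {i_1 > ... > i_s} and complement {j_1 < ... < j_t}, define e_X^{(n)} = a_{i_1}···a_{i_s}(e − a_{j_1})···(e − a_{j_t}) in the semigroup algebra K[K_n]. Then the elements e_X^{(n)} are pairwise orthogonal idempotents (e_X^{(n)} e_Y^{(n)} = 0 for X ≠ Y, and (e_X^{(n)})^2 = e_X^{(n)}) and their sum over all subsets X equals the identity e. -/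
/-- The element `e_X^{(n)} = a_{i₁}⋯a_{i_s}(e - a_{j₁})⋯(e - a_{j_t})` of the monoid
algebra `K[K_n]`, where `X = {i₁ > … > i_s}` and the complement is `{j₁ < … < j_t}`. -/
noncomputable def EXA (n : ℕ) (K : Type*) [Field K] (X : Finset (Fin n)) :
    MonoidAlgebra K (Kiselman n) :=
  MonoidAlgebra.of K (Kiselman n) (eX X) *
    ((Xᶜ.sort (· ≤ ·)).map fun j =>
      (1 : MonoidAlgebra K (Kiselman n)) - MonoidAlgebra.of K (Kiselman n) (ka j)).prod

/-! Auxiliary development -/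

section RingLemmas
variable {R : Type*} [Ring R] (a A B : R)

lemma kis_c1 (hA : a*A*a = a*A) : (a*A)*(a*B) = a*(A*B) := by
  have h : (a*A)*(a*B) = (a*A*a)*B := by rw [mul_assoc (a*A) a B]
  rw [h, hA, mul_assoc]

lemma kis_c2 (hAB : a*(A*B)*a = a*(A*B)) : (a*A)*(B*(1-a)) = 0 := by
  have h1 : (a*A)*(B*(1-a)) = (a*(A*B))*(1-a) := by simp only [mul_assoc]
  rw [h1, mul_sub, mul_one, hAB, sub_self]

lemma kis_c3 (haa : a*a = a) : (A*(1-a))*(a*B) = 0 := by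
  have h : (1-a)*a = 0 := by rw [sub_mul, one_mul, haa, sub_self]
  rw [mul_assoc A (1-a) (a*B), ← mul_assoc (1-a) a B, h, zero_mul, mul_zero]

lemma kis_c_onesub (hB : a*B*a = a*B) : (1-a)*(B*(1-a)) = B*(1-a) := by
  rw [sub_mul, one_mul]
  have h : a*(B*(1-a)) = 0 := by
    rw [mul_sub B 1 a, mul_one, mul_sub, ← mul_assoc, hB, sub_self]
  rw [h, sub_zero]

lemma kis_c4 (hB : a*B*a = a*B) : (A*(1-a))*(B*(1-a)) = (A*B)*(1-a) := by
  rw [mul_assoc, kis_c_onesub a B hB, ← mul_assoc]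

end RingLemmas

lemma sort_insert_max {α : Type*} [LinearOrder α] [DecidableEq α] {t : α} {s : Finset α}
    (h1 : ∀ b ∈ s, b ≤ t) (h2 : t ∉ s) :
    (insert t s).sort (· ≤ ·) = s.sort (· ≤ ·) ++ [t] := by
  refine (fun hp hs => List.Perm.eq_of_pairwise' (Finset.pairwise_sort _ _) hs hp) ?_ ?_
  · rw [← Multiset.coe_eq_coe]
    have e1 : (((insert t s).sort (· ≤ ·) : List α) : Multiset α) = (insert t s).val :=
      Finset.sort_eq _ _
    have e2 : ((s.sort (· ≤ ·) ++ [t] : List α) : Multiset α) = s.val + {t} := by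
      rw [← Multiset.coe_add]
      congr 1
      · exact Finset.sort_eq _ _
    rw [e1, e2, Finset.insert_val_of_notMem h2, ← Multiset.singleton_add, add_comm]
  · refine List.pairwise_append.2 ⟨Finset.pairwise_sort _ _, List.pairwise_singleton _ _, ?_⟩
    intro a ha b hb
    rw [List.mem_singleton] at hb
    subst hb
    exact h1 a ((Finset.mem_sort _).1 ha)

section Kis
variable {n : ℕ}

lemma kis_sound {u v : FreeMonoid (Fin n)} (h : KisRel n u v) : kmk n u = kmk n v :=
  Quotient.sound (ConGen.Rel.of _ _ h)

lemma kmk_of (i : Fin n) : kmk n (.of i) = ka i := rfl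

lemma ka_idem (i : Fin n) : ka i * ka i = ka i := by
  simpa [map_mul, kmk_of] using kis_sound (KisRel.idem i)

lemma ka_braid₂ {i j : Fin n} (h : i < j) : ka j * ka i * ka j = ka j * ka i := by
  simpa [map_mul, kmk_of] using kis_sound (KisRel.braid₂ (n := n) h)

lemma key_mono (t : Fin n) :
    ∀ l : List (Fin n), (∀ i ∈ l, i < t) →
      ka t * kmk n (FreeMonoid.ofList l) * ka t = ka t * kmk n (FreeMonoid.ofList l) := by
  intro l
  induction l with
  | nil => intro _; simpa using ka_idem t
  | cons i l ih =>
    intro h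
    have hi : i < t := h i List.mem_cons_self
    have hW := ih (fun j hj => h j (List.mem_cons_of_mem _ hj))
    set W := kmk n (FreeMonoid.ofList l) with hWdef
    have hcons : kmk n (FreeMonoid.ofList (i :: l)) = ka i * W := by
      rw [FreeMonoid.ofList_cons, map_mul, kmk_of]
    rw [hcons]
    have h1 : ka t * ka i = ka t * ka i * ka t := (ka_braid₂ hi).symm
    calc ka t * (ka i * W) * ka t
        = (ka t * ka i) * (W * ka t) := by simp [mul_assoc]
      _ = (ka t * ka i * ka t) * (W * ka t) := by rw [← h1]
      _ = (ka t * ka i) * (ka t * W * ka t) := by simp [mul_assoc]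
      _ = (ka t * ka i) * (ka t * W) := by rw [hW]
      _ = (ka t * ka i * ka t) * W := by simp [mul_assoc]
      _ = (ka t * ka i) * W := by rw [← h1]
      _ = ka t * (ka i * W) := by simp [mul_assoc]

lemma eX_insert_max {t : Fin n} {X : Finset (Fin n)} (h1 : ∀ b ∈ X, b ≤ t) (h2 : t ∉ X) :
    eX (insert t X) = ka t * eX X := by
  unfold eX
  rw [sort_insert_max h1 h2, List.reverse_append, List.reverse_singleton,
    List.singleton_append, FreeMonoid.ofList_cons, map_mul, kmk_of]

end Kis

noncomputable section Alg
variable {n : ℕ} (K : Type*) [Field K]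

def aA (i : Fin n) : MonoidAlgebra K (Kiselman n) := MonoidAlgebra.of K (Kiselman n) (ka i)

def smallSet (t : Fin n) : Set (MonoidAlgebra K (Kiselman n)) :=
  {x | ∃ l : List (Fin n), (∀ i ∈ l, i < t) ∧
    x = MonoidAlgebra.of K (Kiselman n) (kmk n (FreeMonoid.ofList l))}

def spanSmall (t : Fin n) : Submodule K (MonoidAlgebra K (Kiselman n)) :=
  Submodule.span K (smallSet K t)

lemma one_mem_smallSet (t : Fin n) : (1 : MonoidAlgebra K (Kiselman n)) ∈ smallSet K t :=
  ⟨[], by simp, by rw [show FreeMonoid.ofList ([] : List (Fin n)) = 1 from rfl, map_one, map_one]⟩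

lemma smallSet_mul {t : Fin n} {x y : MonoidAlgebra K (Kiselman n)}
    (hx : x ∈ smallSet K t) (hy : y ∈ smallSet K t) : x * y ∈ smallSet K t := by
  obtain ⟨l₁, h₁, rfl⟩ := hx
  obtain ⟨l₂, h₂, rfl⟩ := hy
  refine ⟨l₁ ++ l₂, ?_, ?_⟩
  · intro i hi
    rcases List.mem_append.1 hi with h | h
    · exact h₁ i h
    · exact h₂ i h
  · rw [FreeMonoid.ofList_append, map_mul, map_mul]

lemma spanSmall_mul {t : Fin n} {x y : MonoidAlgebra K (Kiselman n)}
    (hx : x ∈ spanSmall K t) (hy : y ∈ spanSmall K t) : x * y ∈ spanSmall K t := by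
  have h := Submodule.mul_mem_mul hx hy
  rw [spanSmall, Submodule.span_mul_span] at h
  refine Submodule.span_mono ?_ h
  rintro z ⟨u, hu, v, hv, rfl⟩
  exact smallSet_mul K hu hv

lemma good_span (t : Fin n) {z : MonoidAlgebra K (Kiselman n)} (hz : z ∈ spanSmall K t) :
    aA K t * z * aA K t = aA K t * z := by
  induction hz using Submodule.span_induction with
  | mem x hx =>
    obtain ⟨l, hl, rfl⟩ := hx
    rw [aA, ← map_mul, ← map_mul]
    exact congrArg _ (key_mono t l hl)
  | zero => simp
  | add x y _ _ hx hy => rw [mul_add, add_mul, hx, hy]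
  | smul a x _ hx =>
    rw [mul_smul_comm, smul_mul_assoc, hx]

lemma aA_idem (t : Fin n) : aA K t * aA K t = aA K t := by
  rw [aA, ← map_mul, ka_idem]

def EL (X : Finset (Fin n)) (C : List (Fin n)) : MonoidAlgebra K (Kiselman n) :=
  MonoidAlgebra.of K (Kiselman n) (eX X) * (C.map fun j => 1 - aA K j).prod

lemma eX_mem_smallSet {t : Fin n} {X : Finset (Fin n)} (hX : ∀ i ∈ X, i < t) :
    MonoidAlgebra.of K (Kiselman n) (eX X) ∈ smallSet K t := by
  refine ⟨(X.sort (· ≤ ·)).reverse, ?_, rfl⟩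
  intro i hi
  exact hX i ((Finset.mem_sort _).1 (List.mem_reverse.1 hi))

lemma one_sub_mem {t j : Fin n} (h : j < t) : 1 - aA K j ∈ spanSmall K t := by
  refine sub_mem (Submodule.subset_span (one_mem_smallSet K t)) (Submodule.subset_span ?_)
  exact ⟨[j], by simpa using h, rfl⟩

lemma prod_mem_spanSmall {t : Fin n} {C : List (Fin n)} (hC : ∀ j ∈ C, j < t) :
    (C.map fun j => 1 - aA K j).prod ∈ spanSmall K t := by
  induction C with
  | nil => simpa using (show (1 : MonoidAlgebra K (Kiselman n)) ∈ spanSmall K t from Submodule.subset_span (one_mem_smallSet K t))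
  | cons j C ih =>
    rw [List.map_cons, List.prod_cons]
    exact spanSmall_mul K (one_sub_mem K (hC j List.mem_cons_self))
      (ih fun i hi => hC i (List.mem_cons_of_mem _ hi))

lemma EL_mem_spanSmall {t : Fin n} {X : Finset (Fin n)} {C : List (Fin n)}
    (hX : ∀ i ∈ X, i < t) (hC : ∀ j ∈ C, j < t) : EL K X C ∈ spanSmall K t :=
  spanSmall_mul K (Submodule.subset_span (eX_mem_smallSet K hX)) (prod_mem_spanSmall K hC)

def FmS (n m : ℕ) : Finset (Fin n) := Finset.univ.filter (fun i => i.val < m)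

def Em (m : ℕ) (X : Finset (Fin n)) : MonoidAlgebra K (Kiselman n) :=
  EL K X ((FmS n m \ X).sort (· ≤ ·))

end Alg

noncomputable section Main
variable {n : ℕ} (K : Type*) [Field K]

lemma kis_main (m : ℕ) (hmn : m ≤ n) :
    (∀ X ∈ (FmS n m).powerset, ∀ Y ∈ (FmS n m).powerset,
      Em K m X * Em K m Y = if X = Y then Em K m X else 0) ∧
    (∑ X ∈ (FmS n m).powerset, Em K m X = 1) := by
  induction m with
  | zero =>
    have hF : FmS n 0 = ∅ := by ext i; simp [FmS]
    have hE : Em K 0 (∅ : Finset (Fin n)) = 1 := by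
      rw [Em, hF, EL]
      have h1 : eX (∅ : Finset (Fin n)) = 1 := by
        rw [eX, Finset.sort_empty]
        exact map_one _
      simp [h1, MonoidAlgebra.one_def]
    constructor
    · intro X hX Y hY
      rw [hF, Finset.powerset_empty, Finset.mem_singleton] at hX hY
      subst hX; subst hY
      simp [hE]
    · rw [hF, Finset.powerset_empty, Finset.sum_singleton, hE]
  | succ m ih =>
    have hm : m < n := lt_of_lt_of_le (Nat.lt_succ_self m) hmn
    obtain ⟨pair, hsum⟩ := ih (le_of_lt hm)
    set t : Fin n := ⟨m, hm⟩ with htdef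
    have htF : t ∉ FmS n m := by simp [FmS, htdef]
    have hF : FmS n (m + 1) = insert t (FmS n m) := by
      ext i
      simp only [FmS, Finset.mem_filter, Finset.mem_univ, true_and, Finset.mem_insert,
        Fin.ext_iff, htdef, Fin.val_mk]
      omega
    have hle : ∀ b ∈ FmS n m, b ≤ t := by
      intro b hb
      simp only [FmS, Finset.mem_filter, Finset.mem_univ, true_and] at hb
      exact Fin.le_def.2 (le_of_lt hb)
    have hlt : ∀ b ∈ FmS n m, b < t := by
      intro b hb
      simp only [FmS, Finset.mem_filter, Finset.mem_univ, true_and] at hb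
      exact Fin.lt_def.2 hb
    have hf1 : ∀ X' ⊆ FmS n m, Em K (m + 1) X' = Em K m X' * (1 - aA K t) := by
      intro X' hX'
      have htX' : t ∉ X' := fun h => htF (hX' h)
      have hset : FmS n (m + 1) \ X' = insert t (FmS n m \ X') := by
        rw [hF]; exact Finset.insert_sdiff_of_notMem _ htX'
      rw [Em, hset, sort_insert_max (fun b hb => hle b (Finset.mem_sdiff.1 hb).1)
        (fun h => htF (Finset.mem_sdiff.1 h).1), Em, EL, EL, List.map_append,
        List.prod_append]
      simp [mul_assoc]
    have hf2 : ∀ X' ⊆ FmS n m, Em K (m + 1) (insert t X') = aA K t * Em K m X' := by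
      intro X' hX'
      have htX' : t ∉ X' := fun h => htF (hX' h)
      have hset : FmS n (m + 1) \ insert t X' = FmS n m \ X' := by
        ext i
        simp only [hF, Finset.mem_sdiff, Finset.mem_insert, not_or]
        constructor
        · rintro ⟨h1 | h1, h2, h3⟩
          · exact absurd h1 h2
          · exact ⟨h1, h3⟩
        · rintro ⟨h1, h3⟩
          exact ⟨Or.inr h1, fun he => htF (he ▸ h1), h3⟩
      rw [Em, hset, Em, EL, EL, eX_insert_max (fun b hb => hle b (hX' hb)) htX',
        map_mul, mul_assoc]
      rfl
    have hgood : ∀ X' ⊆ FmS n m, aA K t * Em K m X' * aA K t = aA K t * Em K m X' := by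
      intro X' hX'
      refine good_span K t (EL_mem_spanSmall K (fun i hi => hlt i (hX' hi)) ?_)
      intro j hj
      exact hlt j (Finset.mem_sdiff.1 ((Finset.mem_sort _).1 hj)).1
    have haa := aA_idem K t
    constructor
    · intro X hX Y hY
      rw [Finset.mem_powerset, hF] at hX hY
      by_cases htX : t ∈ X <;> by_cases htY : t ∈ Y
      · -- both contain t
        have hX'sub : X.erase t ⊆ FmS n m := by
          intro i hi
          obtain ⟨hne, hi'⟩ := Finset.mem_erase.1 hi
          rcases Finset.mem_insert.1 (hX hi') with h | h
          · exact absurd h hne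
          · exact h
        have hY'sub : Y.erase t ⊆ FmS n m := by
          intro i hi
          obtain ⟨hne, hi'⟩ := Finset.mem_erase.1 hi
          rcases Finset.mem_insert.1 (hY hi') with h | h
          · exact absurd h hne
          · exact h
        rw [← Finset.insert_erase htX, ← Finset.insert_erase htY,
          hf2 _ hX'sub, hf2 _ hY'sub,
          kis_c1 _ _ _ (hgood _ hX'sub),
          pair _ (Finset.mem_powerset.2 hX'sub) _ (Finset.mem_powerset.2 hY'sub)]
        by_cases hxy : X.erase t = Y.erase t
        · rw [if_pos hxy, if_pos (by rw [hxy])]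
        · rw [if_neg hxy, mul_zero, if_neg]
          intro h
          apply hxy
          have h2 := congrArg (fun s => Finset.erase s t) h
          simpa [Finset.erase_insert (Finset.notMem_erase t X),
            Finset.erase_insert (Finset.notMem_erase t Y)] using h2
      · -- t ∈ X, t ∉ Y
        have hY'sub : Y ⊆ FmS n m := (Finset.subset_insert_iff_of_notMem htY).1 hY
        have hX'sub : X.erase t ⊆ FmS n m := by
          intro i hi
          obtain ⟨hne, hi'⟩ := Finset.mem_erase.1 hi
          rcases Finset.mem_insert.1 (hX hi') with h | h
          · exact absurd h hne
          · exact h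
        rw [← Finset.insert_erase htX, hf2 _ hX'sub, hf1 _ hY'sub]
        have hAB : aA K t * (Em K m (X.erase t) * Em K m Y) * aA K t
            = aA K t * (Em K m (X.erase t) * Em K m Y) := by
          rw [pair _ (Finset.mem_powerset.2 hX'sub) _ (Finset.mem_powerset.2 hY'sub)]
          split_ifs with h
          · exact hgood _ hX'sub
          · simp
        rw [kis_c2 _ _ _ hAB, if_neg]
        intro h
        exact htY (h ▸ Finset.mem_insert_self t (X.erase t))
      · -- t ∉ X, t ∈ Y
        have hX'sub : X ⊆ FmS n m := (Finset.subset_insert_iff_of_notMem htX).1 hX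
        have hY'sub : Y.erase t ⊆ FmS n m := by
          intro i hi
          obtain ⟨hne, hi'⟩ := Finset.mem_erase.1 hi
          rcases Finset.mem_insert.1 (hY hi') with h | h
          · exact absurd h hne
          · exact h
        rw [← Finset.insert_erase htY, hf1 _ hX'sub, hf2 _ hY'sub,
          kis_c3 _ _ _ haa, if_neg]
        intro h
        exact htX (h ▸ Finset.mem_insert_self t (Y.erase t))
      · -- neither contains t
        have hX'sub : X ⊆ FmS n m := (Finset.subset_insert_iff_of_notMem htX).1 hX
        have hY'sub : Y ⊆ FmS n m := (Finset.subset_insert_iff_of_notMem htY).1 hY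
        rw [hf1 _ hX'sub, hf1 _ hY'sub, kis_c4 _ _ _ (hgood _ hY'sub),
          pair _ (Finset.mem_powerset.2 hX'sub) _ (Finset.mem_powerset.2 hY'sub)]
        split_ifs with h
        · rfl
        · exact zero_mul _
    · rw [hF, Finset.sum_powerset_insert htF,
        Finset.sum_congr rfl (fun X' hX' => hf1 X' (Finset.mem_powerset.1 hX')),
        Finset.sum_congr rfl (fun X' hX' => hf2 X' (Finset.mem_powerset.1 hX')),
        ← Finset.sum_mul, ← Finset.mul_sum, hsum, one_mul, mul_one]
      abel

end Main


/-- Proposition 42: the `e_X^{(n)}` are pairwise orthogonal idempotents of `K[K_n]`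
summing to the identity. -/
theorem kiselman_primitive_idempotents (n : ℕ) (K : Type*) [Field K] :
    (∀ X : Finset (Fin n), EXA n K X * EXA n K X = EXA n K X) ∧
    (∀ X Y : Finset (Fin n), X ≠ Y → EXA n K X * EXA n K Y = 0) ∧
    (∑ X : Finset (Fin n), EXA n K X = 1) := by
  have hFn : FmS n n = Finset.univ := by
    ext i; simp [FmS, i.isLt]
  have hE : ∀ X : Finset (Fin n), Em K n X = EXA n K X := by
    intro X
    rw [Em, show FmS n n \ X = Xᶜ by rw [hFn]; exact (Finset.compl_eq_univ_sdiff X).symm]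
    rfl
  obtain ⟨pair, hsum⟩ := kis_main (n := n) K n le_rfl
  refine ⟨?_, ?_, ?_⟩
  · intro X
    have h := pair X (by simp [hFn]) X (by simp [hFn])
    rw [if_pos rfl, hE] at h
    exact h
  · intro X Y hXY
    have h := pair X (by simp [hFn]) Y (by simp [hFn])
    rw [if_neg hXY, hE, hE] at h
    exact h
  · rw [hFn, Finset.powerset_univ] at hsum
    rw [← hsum]
    exact Finset.sum_congr rfl fun X _ => (hE X).symm
end
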